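/- Let X be a real Banach space, n a positive integer, and N a monotonous norm on ℝ^n. Fix x_1, …, x_n ∈ X. If a sequence (y_k)_{k≥1} in X converges weakly to y_0 ∈ X, then N(‖x_1 − y_0‖, …, ‖x_n − y_0‖) ≤ liminf_{k→∞} N(‖x_1 − y_k‖, …, ‖x_n − y_k‖); that is, the function y ↦ N(‖x_1 − y‖, …, ‖x_n − y‖) is sequentially lower semicontinuous for the weak topology of X. -/

import Mathlib

open Filter

/-- The function `y ↦ N(‖x₁ - y‖, …, ‖xₙ - y‖)` is sequentially lower
semicontinuous for the weak topology of a real Banach space `X`. -/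
theorem N_norm_function_weakly_sequentially_lsc
    {X : Type*} [NormedAddCommGroup X] [NormedSpace ℝ X] [CompleteSpace X]
    (n : ℕ) (hn : 0 < n)
    (N : (Fin n → ℝ) → ℝ)
    (hN_eq_zero : ∀ t : Fin n → ℝ, N t = 0 ↔ t = 0)
    (hN_smul : ∀ (a : ℝ) (t : Fin n → ℝ), N (a • t) = |a| * N t)
    (hN_add : ∀ t s : Fin n → ℝ, N (t + s) ≤ N t + N s)
    (hN_mono : ∀ t s : Fin n → ℝ, (∀ i, |t i| ≤ |s i|) → N t ≤ N s)
    (x : Fin n → X) (y : ℕ → X) (y₀ : X)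
    (hweak : ∀ φ : X →L[ℝ] ℝ,
      Tendsto (fun k => φ (y k)) atTop (nhds (φ y₀))) :
    N (fun i => ‖x i - y₀‖) ≤
      liminf (fun k => N (fun i => ‖x i - y k‖)) atTop := by
  classical
  set v : ℕ → (Fin n → ℝ) := fun k i => ‖x i - y k‖ with hvdef
  have hvk : ∀ k, (fun i => ‖x i - y k‖) = v k := fun k => rfl
  simp only [hvk]
  -- Basic facts about N
  have hN0 : N 0 = 0 := (hN_eq_zero 0).mpr rfl
  have hNneg : ∀ t, N (-t) = N t := fun t => by
    have h := hN_smul (-1) t; simpa using h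
  have hNnonneg : ∀ t, 0 ≤ N t := by
    intro t
    have h1 := hN_add t (-t)
    rw [add_neg_cancel, hN0, hNneg] at h1
    linarith
  set C : ℝ := ∑ i, N (Pi.single i 1) with hCdef
  have hsingle : ∀ (i : Fin n) (a : ℝ),
      N (Pi.single i a) = |a| * N (Pi.single i 1) := by
    intro i a
    have h : (Pi.single i a : Fin n → ℝ) = a • (Pi.single i 1 : Fin n → ℝ) := by
      ext j
      by_cases h : j = i <;> simp [Pi.single_apply, h]
    rw [h, hN_smul]
  have hNsum : ∀ (s : Finset (Fin n)) (f : Fin n → (Fin n → ℝ)),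
      N (∑ i ∈ s, f i) ≤ ∑ i ∈ s, N (f i) := by
    intro s f
    induction s using Finset.induction with
    | empty => simp [hN0]
    | insert _ _ h ih =>
      rw [Finset.sum_insert h, Finset.sum_insert h]
      exact le_trans (hN_add _ _) (by linarith)
  have hNle : ∀ t : Fin n → ℝ, N t ≤ C * ‖t‖ := by
    intro t
    have ht : ∑ i, Pi.single i (t i) = t := Finset.univ_sum_single t
    calc N t = N (∑ i, Pi.single i (t i)) := by rw [ht]
      _ ≤ ∑ i, N (Pi.single i (t i)) := hNsum _ _
      _ ≤ ∑ i, ‖t‖ * N (Pi.single i 1) := by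
          refine Finset.sum_le_sum fun i _ => ?_
          rw [hsingle i (t i)]
          refine mul_le_mul_of_nonneg_right ?_ (hNnonneg _)
          simpa [Real.norm_eq_abs] using norm_le_pi_norm t i
      _ = C * ‖t‖ := by rw [← Finset.mul_sum, mul_comm]
  -- The sequence y is norm bounded (Banach–Steinhaus)
  obtain ⟨R, hR⟩ : ∃ R, ∀ k, ‖y k‖ ≤ R := by
    have h1 : ∀ φ : StrongDual ℝ X, ∃ Cφ, ∀ k,
        ‖(NormedSpace.inclusionInDoubleDual ℝ X (y k)) φ‖ ≤ Cφ := by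
      intro φ
      have ht : Tendsto (fun k => ‖φ (y k)‖) atTop (nhds ‖φ y₀‖) := (hweak φ).norm
      obtain ⟨Cφ, hCφ⟩ := ht.bddAbove_range
      exact ⟨Cφ, fun k => by
        simpa [NormedSpace.dual_def] using hCφ (Set.mem_range_self k)⟩
    obtain ⟨R, hR⟩ := banach_steinhaus h1
    refine ⟨R, fun k => ?_⟩
    have hnorm : ‖NormedSpace.inclusionInDoubleDual ℝ X (y k)‖ = ‖y k‖ :=
      (NormedSpace.inclusionInDoubleDualLi ℝ).norm_map (y k)
    rw [← hnorm]; exact hR k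
  -- the vector sequence is bounded
  set M : ℝ := (∑ i, ‖x i‖) + R with hMdef
  have hM0 : 0 ≤ M :=
    add_nonneg (Finset.sum_nonneg fun i _ => norm_nonneg _)
      (le_trans (norm_nonneg (y 0)) (hR 0))
  have hmem : ∀ k, v k ∈ Metric.closedBall (0 : Fin n → ℝ) M := by
    intro k
    rw [Metric.mem_closedBall, dist_zero_right, pi_norm_le_iff_of_nonneg hM0]
    intro i
    have h1 : ‖x i - y k‖ ≤ ‖x i‖ + ‖y k‖ := norm_sub_le _ _
    have h2 : ‖x i‖ ≤ ∑ i', ‖x i'‖ :=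
      Finset.single_le_sum (fun i' _ => norm_nonneg (x i')) (Finset.mem_univ i)
    have h3 : ‖y k‖ ≤ R := hR _
    simp only [hvdef, Real.norm_eq_abs, abs_of_nonneg (norm_nonneg _)]
    linarith
  have hC0 : 0 ≤ C := Finset.sum_nonneg fun i _ => hNnonneg _
  have hub : ∀ k, N (v k) ≤ C * M := by
    intro k
    have h1 : ‖v k‖ ≤ M := by
      have := hmem k
      rwa [Metric.mem_closedBall, dist_zero_right] at this
    exact le_trans (hNle _) (mul_le_mul_of_nonneg_left h1 hC0)
  -- main argument, by contradiction
  by_contra hcon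
  push_neg at hcon
  obtain ⟨b, hb1, hb2⟩ := exists_between hcon
  have hcb : IsCoboundedUnder (· ≥ ·) atTop (fun k => N (v k)) :=
    isCoboundedUnder_ge_of_le atTop (fun k => hub k)
  have hfreq : ∃ᶠ k in atTop, N (v k) < b :=
    frequently_lt_of_liminf_lt hcb hb1
  obtain ⟨σ, hσmono, hσ⟩ := Filter.extraction_of_frequently_atTop hfreq
  obtain ⟨w, -, τ, hτmono, hτ⟩ :=
    tendsto_subseq_of_bounded Metric.isBounded_closedBall (fun j => hmem (σ j))
  have hτ' : Tendsto (fun m => v (σ (τ m))) atTop (nhds w) := hτ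
  have hcomp : ∀ i, Tendsto (fun m => v (σ (τ m)) i) atTop (nhds (w i)) :=
    fun i => (tendsto_pi_nhds.mp hτ') i
  have hw_nonneg : ∀ i, 0 ≤ w i := fun i =>
    le_of_tendsto_of_tendsto' tendsto_const_nhds (hcomp i)
      (fun m => norm_nonneg (x i - y (σ (τ m))))
  -- N w ≤ b by continuity of N
  have hNwb : N w ≤ b := by
    have hzero : Tendsto (fun m => ‖w - v (σ (τ m))‖) atTop (nhds 0) := by
      have h := tendsto_iff_norm_sub_tendsto_zero.mp hτ'
      simpa [norm_sub_rev] using h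
    have hlim : Tendsto (fun m => b + C * ‖w - v (σ (τ m))‖) atTop (nhds (b + C * 0)) :=
      tendsto_const_nhds.add (hzero.const_mul C)
    have hle : ∀ m, N w ≤ b + C * ‖w - v (σ (τ m))‖ := by
      intro m
      have h1 : N w ≤ N (v (σ (τ m))) + N (w - v (σ (τ m))) := by
        have := hN_add (v (σ (τ m))) (w - v (σ (τ m)))
        simpa using this
      have h2 : N (w - v (σ (τ m))) ≤ C * ‖w - v (σ (τ m))‖ := hNle _
      have h3 : N (v (σ (τ m))) < b := hσ (τ m)
      linarith
    have := ge_of_tendsto hlim (Filter.Eventually.of_forall hle)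
    linarith
  -- componentwise lower bound: ‖x i - y₀‖ ≤ w i
  have hwi : ∀ i, ‖x i - y₀‖ ≤ w i := by
    intro i
    by_cases h0 : x i - y₀ = 0
    · rw [h0, norm_zero]; exact hw_nonneg i
    · obtain ⟨g, hg1, hg2⟩ := exists_dual_vector ℝ (x i - y₀) (norm_ne_zero_iff.mpr h0)
      have hg2' : g (x i) - g y₀ = ‖x i - y₀‖ := by
        have : g (x i - y₀) = ‖x i - y₀‖ := by exact_mod_cast hg2
        rw [← this, map_sub]
      have hsub : Tendsto (fun m => σ (τ m)) atTop atTop :=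
        (hσmono.comp hτmono).tendsto_atTop
      have hgt : Tendsto (fun m => g (x i) - g (y (σ (τ m)))) atTop
          (nhds (g (x i) - g y₀)) :=
        tendsto_const_nhds.sub ((hweak g).comp hsub)
      have hle : ∀ m, g (x i) - g (y (σ (τ m))) ≤ v (σ (τ m)) i := by
        intro m
        have h1 : g (x i) - g (y (σ (τ m))) = g (x i - y (σ (τ m))) := by
          rw [map_sub]
        have h2 : g (x i - y (σ (τ m))) ≤ ‖g (x i - y (σ (τ m)))‖ :=
          le_abs_self _
        have h3 : ‖g (x i - y (σ (τ m)))‖ ≤ ‖g‖ * ‖x i - y (σ (τ m))‖ :=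
          g.le_opNorm _
        rw [hg1, one_mul] at h3
        calc g (x i) - g (y (σ (τ m))) = g (x i - y (σ (τ m))) := h1
          _ ≤ ‖g (x i - y (σ (τ m)))‖ := h2
          _ ≤ ‖x i - y (σ (τ m))‖ := h3
          _ = v (σ (τ m)) i := rfl
      have := le_of_tendsto_of_tendsto' hgt (hcomp i) hle
      linarith [hg2']
  have hfinal : N (fun i => ‖x i - y₀‖) ≤ N w := by
    refine hN_mono _ _ fun i => ?_
    rw [abs_of_nonneg (norm_nonneg _), abs_of_nonneg (hw_nonneg i)]
    exact hwi i
  linarith
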